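/- Let s ∈ (3/4,1), u ∈ H^s(ℝ³), and let φ ∈ D^{s,2}(ℝ³) be a weak solution of (−Δ)^s φ = u², i.e. E_s(φ,v) = ∫_{ℝ³} u² v dx for all v ∈ D^{s,2}(ℝ³). Then ∫_{ℝ³} |u(x)|³ dx ≤ E_s(u,u) + (1/4) E_s(φ,φ). -/

import Mathlib

open MeasureTheory Real Filter
open scoped ENNReal NNReal Topology

noncomputable section

abbrev R3 := EuclideanSpace ℝ (Fin 3)

/-- The standard normalizing constant `C(3,s)` of the fractional Laplacian. -/
def fracC (s : ℝ) : ℝ :=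
  (∫ z : R3, (1 - Real.cos (z 0)) / ‖z‖ ^ (3 + 2 * s))⁻¹

/-- The Gagliardo bilinear energy `E_s(u,v)`. -/
def Es (s : ℝ) (u v : R3 → ℝ) : ℝ :=
  (fracC s / 2) *
    ∫ q : R3 × R3, (u q.1 - u q.2) * (v q.1 - v q.2) / ‖q.1 - q.2‖ ^ (3 + 2 * s)

/-- Finiteness of the Gagliardo seminorm. -/
def GagliardoFinite (s : ℝ) (u : R3 → ℝ) : Prop :=
  Integrable (fun q : R3 × R3 => (u q.1 - u q.2) ^ 2 / ‖q.1 - q.2‖ ^ (3 + 2 * s))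

/-- Membership in the fractional Sobolev space `H^s(ℝ³)`. -/
def MemHs (s : ℝ) (u : R3 → ℝ) : Prop :=
  MemLp u 2 volume ∧ GagliardoFinite s u

/-- The `H^s(ℝ³)` norm. -/
def HsNorm (s : ℝ) (u : R3 → ℝ) : ℝ :=
  Real.sqrt ((∫ x, u x ^ 2) + Es s u u)

/-- The constant `c_s` of the Riesz potential. -/
def rieszC (s : ℝ) : ℝ :=
  Real.pi ^ (-(3:ℝ)/2) * (2:ℝ) ^ (-(2*s)) * Real.Gamma (3 - 2*s) / Real.Gamma s

/-- The Riesz potential `φ_u` solving `(-Δ)^s φ = u²`. -/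
def phiu (s : ℝ) (u : R3 → ℝ) (x : R3) : ℝ :=
  rieszC s * ∫ y, u y ^ 2 / ‖x - y‖ ^ (3 - 2*s)

/-- Membership in the homogeneous space `D^{s,2}(ℝ³)`. -/
def MemDs2 (s : ℝ) (φ : R3 → ℝ) : Prop :=
  MemLp φ (ENNReal.ofReal (6/(3-2*s))) volume ∧ GagliardoFinite s φ

/-- Interpolation: an a.e.-bounded function in `L²` lies in `L^p` for `2 ≤ p < ∞`. -/
lemma memLp_between {α : Type*} [MeasurableSpace α] {μ : Measure α}
    {f : α → ℝ} (hf2 : MemLp f 2 μ) {k : ℝ}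
    (hbd : ∀ x, |f x| ≤ k) {p : ℝ≥0∞} (hp2 : 2 ≤ p) (hptop : p ≠ ⊤) :
    MemLp f p μ := by
  have hp0 : p ≠ 0 := by
    intro h; rw [h] at hp2; exact absurd hp2 (by simp)
  refine ⟨hf2.1, ?_⟩
  rw [eLpNorm_lt_top_iff_lintegral_rpow_enorm_lt_top hp0 hptop]
  have hpr2 : (2:ℝ) ≤ p.toReal := by
    have := ENNReal.toReal_mono hptop hp2
    simpa using this
  have hint2 : (∫⁻ x, (‖f x‖₊ : ℝ≥0∞) ^ (2:ℝ) ∂μ) < ⊤ := by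
    have := lintegral_rpow_enorm_lt_top_of_eLpNorm_lt_top (f := f) (p := 2)
      (by norm_num) (by norm_num) hf2.2
    simpa [enorm_eq_nnnorm] using this
  calc (∫⁻ x, (‖f x‖₊ : ℝ≥0∞) ^ p.toReal ∂μ)
      ≤ ∫⁻ x, ENNReal.ofReal k ^ (p.toReal - 2) * (‖f x‖₊ : ℝ≥0∞) ^ (2:ℝ) ∂μ := by
        refine lintegral_mono fun x => ?_
        have hfk : (‖f x‖₊ : ℝ≥0∞) ≤ ENNReal.ofReal k := by
          rw [← enorm_eq_nnnorm, ← ofReal_norm]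
          exact ENNReal.ofReal_le_ofReal (by simpa [Real.norm_eq_abs] using hbd x)
        have : (‖f x‖₊ : ℝ≥0∞) ^ p.toReal
            = (‖f x‖₊ : ℝ≥0∞) ^ (p.toReal - 2) * (‖f x‖₊ : ℝ≥0∞) ^ (2:ℝ) := by
          rw [← ENNReal.rpow_add_of_nonneg _ _ (by linarith) (by norm_num)]
          norm_num
        rw [this]
        exact mul_le_mul_left (ENNReal.rpow_le_rpow hfk (by linarith)) _
    _ = ENNReal.ofReal k ^ (p.toReal - 2) * ∫⁻ x, (‖f x‖₊ : ℝ≥0∞) ^ (2:ℝ) ∂μ :=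
        lintegral_const_mul' _ _ (ENNReal.rpow_ne_top_of_nonneg (by linarith)
          ENNReal.ofReal_ne_top)
    _ < ⊤ := ENNReal.mul_lt_top
        (ENNReal.rpow_lt_top_of_nonneg (by linarith) ENNReal.ofReal_ne_top) hint2

/-- Estimate (5.3): if `φ ∈ D^{s,2}(ℝ³)` weakly solves `(-Δ)^s φ = u²` for `u ∈ H^s(ℝ³)`,
then `∫ |u|³ ≤ E_s(u,u) + (1/4)E_s(φ,φ)`. -/
theorem cube_integral_bound (s : ℝ) (hs : 3/4 < s ∧ s < 1)
    (u : R3 → ℝ) (hu : MemHs s u)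
    (φ : R3 → ℝ) (hφ : MemDs2 s φ)
    (hsol : ∀ v : R3 → ℝ, MemDs2 s v → Es s φ v = ∫ x, u x ^ 2 * v x) :
    (∫ x, |u x| ^ 3) ≤ Es s u u + (1/4) * Es s φ φ := by
  obtain ⟨hs1, hs2⟩ := hs
  have hum : AEStronglyMeasurable u (volume : Measure R3) := hu.1.1
  have hφm : AEStronglyMeasurable φ (volume : Measure R3) := hφ.1.1
  -- nonnegativity of the constant and of the quadratic energies
  have hCnn : 0 ≤ fracC s := by
    unfold fracC
    refine inv_nonneg.2 (integral_nonneg fun z => ?_)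
    have h1 := Real.cos_le_one (z 0)
    exact div_nonneg (by linarith) (Real.rpow_nonneg (norm_nonneg _) _)
  have hEnn : ∀ w : R3 → ℝ, 0 ≤ Es s w w := by
    intro w
    refine mul_nonneg (div_nonneg hCnn (by norm_num)) (integral_nonneg fun q => ?_)
    exact div_nonneg (mul_self_nonneg _) (Real.rpow_nonneg (norm_nonneg _) _)
  -- continuity / measurability of the kernel
  have hKc : Continuous fun q : R3 × R3 => ‖q.1 - q.2‖ ^ (3 + 2 * s) :=
    (continuous_fst.sub continuous_snd).norm.rpow_const fun q => Or.inr (by linarith)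
  have hKnn : ∀ q : R3 × R3, (0:ℝ) ≤ ‖q.1 - q.2‖ ^ (3 + 2 * s) := fun q =>
    Real.rpow_nonneg (norm_nonneg _) _
  have haesm : ∀ w : R3 → ℝ, AEStronglyMeasurable w (volume : Measure R3) →
      AEStronglyMeasurable
        (fun q : R3 × R3 => (w q.1 - w q.2)) (volume : Measure (R3 × R3)) := by
    intro w hw
    exact ((hw.aemeasurable.comp_quasiMeasurePreserving
      Measure.quasiMeasurePreserving_fst).sub
      (hw.aemeasurable.comp_quasiMeasurePreserving
      Measure.quasiMeasurePreserving_snd)).aestronglyMeasurable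
  -- the key uniform bound for the truncations
  have key : ∀ k : ℕ, (∫ x, u x ^ 2 * min |u x| (k:ℝ)) ≤
      Es s u u + (1/4) * Es s φ φ := by
    intro k
    set v : R3 → ℝ := fun x => min |u x| (k:ℝ) with hv
    have hvnn : ∀ x, 0 ≤ v x := fun x => le_min (abs_nonneg _) (Nat.cast_nonneg _)
    have hvle : ∀ x, |v x| ≤ |u x| := fun x => by
      rw [abs_of_nonneg (hvnn x)]; exact min_le_left _ _
    have hvm : AEStronglyMeasurable v (volume : Measure R3) :=
      (continuous_abs.min continuous_const).comp_aestronglyMeasurable hum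
    have hlip : ∀ a b : ℝ, |min |a| (k:ℝ) - min |b| (k:ℝ)| ≤ |a - b| := by
      intro a b
      refine le_trans (abs_min_sub_min_le_max _ _ _ _) ?_
      simp only [sub_self, abs_zero]
      rw [max_eq_left (abs_nonneg _)]
      exact (abs_abs_sub_abs_le_abs_sub a b)
    -- Gagliardo finiteness of the truncation
    have hvG : GagliardoFinite s v := by
      refine hu.2.mono ?_ ?_
      · exact ((((haesm v hvm).aemeasurable.mul (haesm v hvm).aemeasurable).div
          hKc.measurable.aemeasurable).aestronglyMeasurable).congr
          (Filter.Eventually.of_forall fun q => by simp [pow_two])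
      · refine Filter.Eventually.of_forall fun q => ?_
        have h1 : (v q.1 - v q.2) ^ 2 ≤ (u q.1 - u q.2) ^ 2 := by
          have := hlip (u q.1) (u q.2)
          nlinarith [abs_nonneg (u q.1 - u q.2), abs_nonneg (v q.1 - v q.2),
            sq_abs (v q.1 - v q.2), sq_abs (u q.1 - u q.2),
            abs_sub_abs_le_abs_sub (v q.1) (v q.2)]
        rw [Real.norm_eq_abs, Real.norm_eq_abs,
          abs_of_nonneg (div_nonneg (sq_nonneg _) (hKnn q)),
          abs_of_nonneg (div_nonneg (sq_nonneg _) (hKnn q)),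
          div_eq_mul_inv, div_eq_mul_inv]
        exact mul_le_mul_of_nonneg_right h1 (inv_nonneg.2 (hKnn q))
    -- Lᵖ membership of the truncation
    have hvLp : MemLp v (ENNReal.ofReal (6/(3-2*s))) volume := by
      have hv2 : MemLp v 2 volume := by
        refine hu.1.of_le hvm (Filter.Eventually.of_forall fun x => ?_)
        simpa [Real.norm_eq_abs, abs_abs] using hvle x
      refine memLp_between hv2 (k := (k:ℝ))
        (fun x => by rw [abs_of_nonneg (hvnn x)]; exact min_le_right _ _) ?_
        ENNReal.ofReal_ne_top
      have h32 : (0:ℝ) < 3 - 2*s := by linarith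
      have h26 : (2:ℝ) ≤ 6/(3-2*s) := by
        rw [le_div_iff₀ h32]; nlinarith
      calc (2:ℝ≥0∞) = ENNReal.ofReal 2 := by norm_num
        _ ≤ ENNReal.ofReal (6/(3-2*s)) := ENNReal.ofReal_le_ofReal h26
    have hEv := hsol v ⟨hvLp, hvG⟩
    -- bound `Es s φ v` by Young's inequality
    set K : R3 × R3 → ℝ := fun q => ‖q.1 - q.2‖ ^ (3 + 2 * s) with hKdef
    set G : R3 × R3 → ℝ := fun q =>
      (1/4) * ((φ q.1 - φ q.2) ^ 2 / K q) + (u q.1 - u q.2) ^ 2 / K q with hG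
    have hGint : Integrable G := (hφ.2.const_mul (1/4)).add hu.2
    have hGnn : ∀ q, 0 ≤ G q := fun q => add_nonneg
      (mul_nonneg (by norm_num) (div_nonneg (sq_nonneg _) (hKnn q)))
      (div_nonneg (sq_nonneg _) (hKnn q))
    have hFbd : ∀ q : R3 × R3,
        ‖(φ q.1 - φ q.2) * (v q.1 - v q.2) / K q‖ ≤ G q := by
      intro q
      rw [Real.norm_eq_abs, abs_div, abs_of_nonneg (hKnn q)]
      have h1 : |(φ q.1 - φ q.2) * (v q.1 - v q.2)| ≤
          (1/4) * (φ q.1 - φ q.2) ^ 2 + (v q.1 - v q.2) ^ 2 := by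
        rw [abs_mul]
        nlinarith [sq_nonneg (|φ q.1 - φ q.2| - 2 * |v q.1 - v q.2|),
          sq_abs (φ q.1 - φ q.2), sq_abs (v q.1 - v q.2),
          abs_nonneg (φ q.1 - φ q.2), abs_nonneg (v q.1 - v q.2)]
      have h2 : (v q.1 - v q.2) ^ 2 ≤ (u q.1 - u q.2) ^ 2 := by
        have := hlip (u q.1) (u q.2)
        nlinarith [abs_nonneg (u q.1 - u q.2), abs_nonneg (v q.1 - v q.2),
          sq_abs (v q.1 - v q.2), sq_abs (u q.1 - u q.2)]
      calc |(φ q.1 - φ q.2) * (v q.1 - v q.2)| / K q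
          ≤ ((1/4) * (φ q.1 - φ q.2) ^ 2 + (u q.1 - u q.2) ^ 2) / K q := by
            rw [div_eq_mul_inv, div_eq_mul_inv]
            exact mul_le_mul_of_nonneg_right (by linarith) (inv_nonneg.2 (hKnn q))
        _ = G q := by simp only [hG]; ring
    have hFm : AEStronglyMeasurable
        (fun q : R3 × R3 => (φ q.1 - φ q.2) * (v q.1 - v q.2) / K q)
        (volume : Measure (R3 × R3)) :=
      (((haesm φ hφm).aemeasurable.mul (haesm v hvm).aemeasurable).div
        hKc.measurable.aemeasurable).aestronglyMeasurable
    have hFint : Integrable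
        (fun q : R3 × R3 => (φ q.1 - φ q.2) * (v q.1 - v q.2) / K q) :=
      hGint.mono hFm (Filter.Eventually.of_forall fun q => by
        rw [Real.norm_eq_abs (G q), abs_of_nonneg (hGnn q)]; exact hFbd q)
    have hIle : (∫ q : R3 × R3, (φ q.1 - φ q.2) * (v q.1 - v q.2) / K q) ≤
        ∫ q : R3 × R3, G q :=
      integral_mono hFint hGint fun q =>
        (le_abs_self _).trans (by rw [← Real.norm_eq_abs]; exact hFbd q)
    have hIG : (∫ q : R3 × R3, G q) =
        (1/4) * (∫ q : R3 × R3, (φ q.1 - φ q.2) ^ 2 / K q) +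
        ∫ q : R3 × R3, (u q.1 - u q.2) ^ 2 / K q := by
      rw [hG, integral_add (hφ.2.const_mul (1/4)) hu.2, integral_const_mul]
    -- identify the quadratic energies
    have hsqφ : (∫ q : R3 × R3, (φ q.1 - φ q.2) * (φ q.1 - φ q.2) / K q) =
        ∫ q : R3 × R3, (φ q.1 - φ q.2) ^ 2 / K q := by
      congr 1; funext q; rw [pow_two]
    have hsqu : (∫ q : R3 × R3, (u q.1 - u q.2) * (u q.1 - u q.2) / K q) =
        ∫ q : R3 × R3, (u q.1 - u q.2) ^ 2 / K q := by
      congr 1; funext q; rw [pow_two]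
    have hfinal : Es s φ v ≤ Es s u u + (1/4) * Es s φ φ := by
      have h1 : Es s φ v ≤ (fracC s / 2) * ∫ q : R3 × R3, G q := by
        unfold Es
        exact mul_le_mul_of_nonneg_left hIle (div_nonneg hCnn (by norm_num))
      refine h1.trans ?_
      rw [hIG]
      unfold Es
      rw [hsqφ, hsqu]
      exact le_of_eq (by ring)
    calc (∫ x, u x ^ 2 * min |u x| (k:ℝ)) = Es s φ v := hEv.symm
      _ ≤ Es s u u + (1/4) * Es s φ φ := hfinal
  -- pass to the limit
  by_cases hI : Integrable (fun x : R3 => |u x| ^ 3)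
  · have hconv : Tendsto (fun k : ℕ => ∫ x, u x ^ 2 * min |u x| (k:ℝ)) atTop
        (𝓝 (∫ x, |u x| ^ 3)) := by
      refine tendsto_integral_of_dominated_convergence (fun x => |u x| ^ 3)
        (fun k => ?_) hI (fun k => Filter.Eventually.of_forall fun x => ?_)
        (Filter.Eventually.of_forall fun x => ?_)
      · exact (((continuous_pow 2).mul
          (continuous_abs.min continuous_const)).comp_aestronglyMeasurable hum)
      · have h0 : 0 ≤ min |u x| (k:ℝ) := le_min (abs_nonneg _) (Nat.cast_nonneg _)
        rw [Real.norm_eq_abs, abs_of_nonneg (mul_nonneg (sq_nonneg _) h0)]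
        calc u x ^ 2 * min |u x| (k:ℝ) ≤ u x ^ 2 * |u x| :=
              mul_le_mul_of_nonneg_left (min_le_left _ _) (sq_nonneg _)
          _ = |u x| ^ 3 := by rw [← sq_abs]; ring
      · refine Tendsto.congr' ?_ (tendsto_const_nhds (x := |u x| ^ 3))
        filter_upwards [eventually_ge_atTop ⌈|u x|⌉₊] with n hn
        have hxn : |u x| ≤ (n:ℝ) := (Nat.le_ceil _).trans (Nat.cast_le.2 hn)
        rw [min_eq_left hxn, ← sq_abs]; ring
    exact le_of_tendsto' hconv key
  · rw [integral_undef hI]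
    have := hEnn u; have := hEnn φ
    linarith

end
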